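/- arXiv:2206.06468 — 5 statements merged into one kernel-verified Lean document; each statement's English description precedes it below -/
import Mathlib

section
/- If α + β ≠ 0, then for all natural numbers t, M^t = (1/(α+β)) · [[β + α·r^t, α - α·r^t],[β - β·r^t, α + β·r^t]], where r = 1-αγ-βγ. -/
theorem stmt_6 (α β γ : ℝ) (hab : α + β ≠ 0) (r : ℝ) (hr : r = 1 - α * γ - β * γ) :
    ∀ t : ℕ, (!![1 - α * γ, α * γ; β * γ, 1 - β * γ] : Matrix (Fin 2) (Fin 2) ℝ) ^ t =
      (α + β)⁻¹ • !![β + α * r ^ t, α - α * r ^ t; β - β * r ^ t, α + β * r ^ t] := by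
  intro t
  induction t with
  | zero =>
      ext i j
      fin_cases i <;> fin_cases j <;>
        simp [Matrix.one_apply] <;> field_simp <;> ring
  | succ n ih =>
      rw [pow_succ, ih]
      ext i j
      fin_cases i <;> fin_cases j <;>
        · simp [Matrix.mul_apply, Fin.sum_univ_two, hr]
          field_simp
          ring
end

section
/- If |1-αγ-βγ| < 1 and α + β ≠ 0, then M^t converges as t → ∞ to the matrix (1/(α+β))·[[β, α],[β, α]]. -/
theorem stmt_7 (α β γ : ℝ) (hab : α + β ≠ 0) (hr : |1 - α * γ - β * γ| < 1) :
    Filter.Tendsto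
      (fun t : ℕ => (!![1 - α * γ, α * γ; β * γ, 1 - β * γ] : Matrix (Fin 2) (Fin 2) ℝ) ^ t)
      Filter.atTop (nhds ((α + β)⁻¹ • !![β, α; β, α])) := by
  set r : ℝ := 1 - α * γ - β * γ with hrdef
  set M : Matrix (Fin 2) (Fin 2) ℝ := !![1 - α * γ, α * γ; β * γ, 1 - β * γ] with hM
  set A : Matrix (Fin 2) (Fin 2) ℝ := !![β, α; β, α] with hA
  set B : Matrix (Fin 2) (Fin 2) ℝ := !![α, -α; -β, β] with hB
  have hAM : A * M = A := by
    ext i j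
    fin_cases i <;> fin_cases j <;>
      simp [hA, hM, Matrix.mul_apply, Fin.sum_univ_two] <;> ring
  have hBM : B * M = r • B := by
    ext i j
    fin_cases i <;> fin_cases j <;>
      simp [hB, hM, hrdef, Matrix.mul_apply, Fin.sum_univ_two] <;> ring
  have hkey : ∀ t : ℕ, M ^ t = (α + β)⁻¹ • A + r ^ t • ((α + β)⁻¹ • B) := by
    intro t
    induction t with
    | zero =>
      simp only [pow_zero, one_smul]
      ext i j
      fin_cases i <;> fin_cases j <;>
        simp [hA, hB, Matrix.one_apply] <;> field_simp <;> ring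
    | succ n ih =>
      rw [pow_succ, ih, add_mul, Matrix.smul_mul, Matrix.smul_mul, Matrix.smul_mul,
        hAM, hBM, pow_succ]
      rw [smul_comm ((α + β)⁻¹) r B]
      rw [smul_smul (r ^ n) r ((α + β)⁻¹ • B)]
  simp only [hkey]
  have h0 : Filter.Tendsto (fun t : ℕ => r ^ t) Filter.atTop (nhds 0) :=
    tendsto_pow_atTop_nhds_zero_of_abs_lt_one hr
  have := (h0.smul_const ((α + β)⁻¹ • B)).const_add ((α + β)⁻¹ • A)
  simpa using this
end

section
/- If |1-αγ-βγ| < 1 and α + β ≠ 0, then for any initial state (A₀, B₀), the sequence defined by (A(t+1), B(t+1)) = (A(t)(1-αγ)+αγB(t), B(t)(1-βγ)+βγA(t)) with (A(0),B(0)) = (A₀,B₀) satisfies: both A(t) and B(t) converge to (βA₀ + αB₀)/(α+β). -/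
theorem stmt_8 (α β γ A₀ B₀ : ℝ) (hab : α + β ≠ 0) (hr : |1 - α * γ - β * γ| < 1)
    (A B : ℕ → ℝ) (hA0 : A 0 = A₀) (hB0 : B 0 = B₀)
    (hA : ∀ t, A (t + 1) = A t * (1 - α * γ) + α * γ * B t)
    (hB : ∀ t, B (t + 1) = B t * (1 - β * γ) + β * γ * A t) :
    Filter.Tendsto A Filter.atTop (nhds ((β * A₀ + α * B₀) / (α + β))) ∧
    Filter.Tendsto B Filter.atTop (nhds ((β * A₀ + α * B₀) / (α + β))) := by
  set r : ℝ := 1 - α * γ - β * γ with hrdef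
  set C : ℝ := β * A₀ + α * B₀ with hC
  set d : ℝ := A₀ - B₀ with hd
  have key : ∀ t, A t = (C + α * (r ^ t * d)) / (α + β) ∧
      B t = (C - β * (r ^ t * d)) / (α + β) := by
    intro t
    induction t with
    | zero =>
      simp only [pow_zero, one_mul, hA0, hB0, hC, hd]
      constructor <;> field_simp <;> ring
    | succ n ih =>
      obtain ⟨h1, h2⟩ := ih
      rw [hA n, hB n, h1, h2]
      constructor <;> field_simp <;> ring
  have hpow : Filter.Tendsto (fun t : ℕ => r ^ t) Filter.atTop (nhds 0) :=
    tendsto_pow_atTop_nhds_zero_of_abs_lt_one hr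
  have h1 : Filter.Tendsto (fun t : ℕ => (C + α * (r ^ t * d)) / (α + β))
      Filter.atTop (nhds (C / (α + β))) := by
    have := (((hpow.mul_const d).const_mul α).const_add C).div_const (α + β)
    simpa using this
  have h2 : Filter.Tendsto (fun t : ℕ => (C - β * (r ^ t * d)) / (α + β))
      Filter.atTop (nhds (C / (α + β))) := by
    have := (((hpow.mul_const d).const_mul β).const_sub C).div_const (α + β)
    simpa using this
  constructor
  · exact h1.congr fun t => (key t).1.symm
  · exact h2.congr fun t => (key t).2.symm
end

section
/- If 1-αγ-βγ = -1 and α + β ≠ 0, then for all even t, M^t is the identity matrix, and for all odd t, M^t = (1/(α+β))·[[β-α, 2α],[2β, α-β]]. -/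
theorem stmt_9 (α β γ : ℝ) (h : 1 - α * γ - β * γ = -1) (hab : α + β ≠ 0) :
    ∀ t : ℕ,
      (Even t → (!![1 - α * γ, α * γ; β * γ, 1 - β * γ] : Matrix (Fin 2) (Fin 2) ℝ) ^ t = 1) ∧
      (Odd t → (!![1 - α * γ, α * γ; β * γ, 1 - β * γ] : Matrix (Fin 2) (Fin 2) ℝ) ^ t =
        (α + β)⁻¹ • !![β - α, 2 * α; 2 * β, α - β]) := by
  set M : Matrix (Fin 2) (Fin 2) ℝ := !![1 - α * γ, α * γ; β * γ, 1 - β * γ] with hMdef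
  have hM : M = (α + β)⁻¹ • !![β - α, 2 * α; 2 * β, α - β] := by
    have hγ : α * γ + β * γ = 2 := by linarith
    ext i j
    fin_cases i <;> fin_cases j <;>
      simp [hMdef, Matrix.smul_apply, inv_mul_eq_div] <;> rw [eq_div_iff hab] <;>
      first
        | linear_combination (-α) * hγ
        | linear_combination α * hγ
        | linear_combination β * hγ
        | linear_combination (-β) * hγ
  have hM2 : M ^ 2 = 1 := by
    rw [pow_two]
    ext i j
    fin_cases i <;> fin_cases j <;>
      · simp [hM, Matrix.mul_apply, Fin.sum_univ_two, Matrix.one_apply]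
        field_simp
        ring
  intro t
  induction t with
  | zero => exact ⟨fun _ => pow_zero M, fun h' => absurd h' (by simp)⟩
  | succ n ih =>
    constructor
    · intro he
      have ho : Odd n := Nat.Even.sub_odd (Nat.one_le_iff_ne_zero.mpr (by omega)) he (by simp)
      rw [pow_succ, ih.2 ho, ← hM, ← pow_two, hM2]
    · intro ho
      have he : Even n := by simpa using Nat.Odd.sub_odd ho odd_one
      rw [pow_succ, ih.1 he, one_mul, hM]
end

section
/- If 1-αγ-βγ = -1 and α + β ≠ 0, then the sequence (A(t), B(t)) oscillates with period 2: (A(t),B(t)) = (A₀,B₀) for even t, and (A(t),B(t)) = (((β-α)A₀ + 2αB₀)/(α+β), ((α-β)B₀ + 2βA₀)/(α+β)) for odd t. -/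
theorem stmt_10 (α β γ A₀ B₀ : ℝ) (h : 1 - α * γ - β * γ = -1) (hab : α + β ≠ 0)
    (A B : ℕ → ℝ) (hA0 : A 0 = A₀) (hB0 : B 0 = B₀)
    (hA : ∀ t, A (t + 1) = A t * (1 - α * γ) + α * γ * B t)
    (hB : ∀ t, B (t + 1) = B t * (1 - β * γ) + β * γ * A t) :
    ∀ t : ℕ,
      (Even t → A t = A₀ ∧ B t = B₀) ∧
      (Odd t → A t = ((β - α) * A₀ + 2 * α * B₀) / (α + β) ∧
               B t = ((α - β) * B₀ + 2 * β * A₀) / (α + β)) := by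
  have hγ : γ * (α + β) = 2 := by nlinarith
  intro t
  induction t with
  | zero =>
    refine ⟨fun _ => ⟨hA0, hB0⟩, fun ho => absurd ho (by decide)⟩
  | succ n ih =>
    obtain ⟨ihe, iho⟩ := ih
    constructor
    · intro he
      have hn : Odd n := by
        rw [Nat.even_add_one] at he
        exact Nat.not_even_iff_odd.mp he
      obtain ⟨h1, h2⟩ := iho hn
      constructor
      · rw [hA, h1, h2]; field_simp; linear_combination (α * A₀ - α * B₀) * hγ
      · rw [hB, h1, h2]; field_simp; linear_combination (β * B₀ - β * A₀) * hγ
    · intro ho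
      have hn : Even n := by
        rw [Nat.odd_add_one] at ho
        exact Nat.not_odd_iff_even.mp ho
      obtain ⟨h1, h2⟩ := ihe hn
      constructor
      · rw [hA, h1, h2]; field_simp; linear_combination (α * B₀ - α * A₀) * hγ
      · rw [hB, h1, h2]; field_simp; linear_combination (β * A₀ - β * B₀) * hγ
end
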